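/- Let f be an analytic circle diffeomorphism with lift F, let p, q be coprime integers with q ≥ 1, and suppose there exists x₀ ∈ ℝ with F^q(x₀) = x₀ + p and (F^q)'(x₀) ≠ 1 (a hyperbolic periodic orbit of rotation number p/q). Then there exists ε > 0 such that for every real ω with |ω| < ε, one has rot(f + ω) = p/q (mod 1). In particular, ω = 0 is an interior point of the interval I_{p/q} = {ω ∈ ℝ/ℤ : rot(f+ω) = p/q}. -/

import Mathlib

open Filter Topology

/-- An analytic circle diffeomorphism, given by an analytic, strictly increasing lift
`F : ℝ → ℝ` with `F (x+1) = F x + 1`, together with an analytic inverse. -/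
structure AnalyticCircleDiffeo where
  toFun : ℝ → ℝ
  invFun : ℝ → ℝ
  analyticAt_toFun : ∀ x, AnalyticAt ℝ toFun x
  analyticAt_invFun : ∀ x, AnalyticAt ℝ invFun x
  strictMono_toFun : StrictMono toFun
  leftInverse : Function.LeftInverse invFun toFun
  rightInverse : Function.RightInverse invFun toFun
  map_add_one : ∀ x, toFun (x + 1) = toFun x + 1

namespace AnalyticCircleDiffeo

/-- The rotation number of (the chosen lift of) a circle diffeomorphism. -/
noncomputable def rot (f : AnalyticCircleDiffeo) : ℝ :=
  limUnder atTop fun n : ℕ => f.toFun^[n] 0 / n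

/-- The composition of two analytic circle diffeomorphisms. -/
def comp (f g : AnalyticCircleDiffeo) : AnalyticCircleDiffeo where
  toFun := f.toFun ∘ g.toFun
  invFun := g.invFun ∘ f.invFun
  analyticAt_toFun := fun x => (f.analyticAt_toFun _).comp (g.analyticAt_toFun x)
  analyticAt_invFun := fun x => (g.analyticAt_invFun _).comp (f.analyticAt_invFun x)
  strictMono_toFun := f.strictMono_toFun.comp g.strictMono_toFun
  leftInverse := fun x => by
    show g.invFun (f.invFun (f.toFun (g.toFun x))) = x
    rw [f.leftInverse (g.toFun x), g.leftInverse x]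
  rightInverse := fun x => by
    show f.toFun (g.toFun (g.invFun (f.invFun x))) = x
    rw [g.rightInverse (f.invFun x), f.rightInverse x]
  map_add_one := fun x => by
    show f.toFun (g.toFun (x + 1)) = f.toFun (g.toFun x) + 1
    rw [g.map_add_one, f.map_add_one]

/-- The inverse of an analytic circle diffeomorphism. -/
def symm (f : AnalyticCircleDiffeo) : AnalyticCircleDiffeo where
  toFun := f.invFun
  invFun := f.toFun
  analyticAt_toFun := f.analyticAt_invFun
  analyticAt_invFun := f.analyticAt_toFun
  strictMono_toFun := fun x y hxy => by
    have h := f.strictMono_toFun.lt_iff_lt (a := f.invFun x) (b := f.invFun y)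
    rw [f.rightInverse x, f.rightInverse y] at h
    exact h.mp hxy
  leftInverse := f.rightInverse
  rightInverse := f.leftInverse
  map_add_one := fun x => by
    apply f.strictMono_toFun.injective
    rw [f.rightInverse, f.map_add_one, f.rightInverse]

/-- The circle diffeomorphism `f + ω : x ↦ f x + ω`. -/
noncomputable def addConst (f : AnalyticCircleDiffeo) (ω : ℝ) : AnalyticCircleDiffeo where
  toFun := fun x => f.toFun x + ω
  invFun := fun x => f.invFun (x - ω)
  analyticAt_toFun := fun x => (f.analyticAt_toFun x).add analyticAt_const
  analyticAt_invFun := fun x => by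
    have h1 : AnalyticAt ℝ (fun y : ℝ => y - ω) x := analyticAt_id.sub analyticAt_const
    have h2 : AnalyticAt ℝ (f.invFun ∘ fun y : ℝ => y - ω) x :=
      AnalyticAt.comp (g := f.invFun) (f := fun y : ℝ => y - ω)
        (f.analyticAt_invFun (x - ω)) h1
    exact h2
  strictMono_toFun := fun x y hxy => by
    show f.toFun x + ω < f.toFun y + ω
    linarith [f.strictMono_toFun hxy]
  leftInverse := fun x => by
    show f.invFun (f.toFun x + ω - ω) = x
    rw [add_sub_cancel_right, f.leftInverse x]
  rightInverse := fun x => by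
    show f.toFun (f.invFun (x - ω)) + ω = x
    rw [f.rightInverse (x - ω)]; ring
  map_add_one := fun x => by
    show f.toFun (x + 1) + ω = f.toFun x + ω + 1
    rw [f.map_add_one]; ring

/-- Two circle diffeomorphisms are analytically conjugate: `f₂ = h ∘ f₁ ∘ h⁻¹` as maps
of `ℝ/ℤ`; in terms of lifts, `h ∘ f₁ = f₂ ∘ h + k` for some integer `k`. -/
def Conjugate (f₁ f₂ : AnalyticCircleDiffeo) : Prop :=
  ∃ h : AnalyticCircleDiffeo, ∃ k : ℤ,
    ∀ x, h.toFun (f₁.toFun x) = f₂.toFun (h.toFun x) + k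

/-- `f` is the identity of `ℝ/ℤ`, i.e. its lift is an integer translation. -/
def IsId (f : AnalyticCircleDiffeo) : Prop :=
  ∃ k : ℤ, ∀ x, f.toFun x = x + k

/-- A circle diffeomorphism (with rotation number `0 mod 1`) is hyperbolic if it has a
fixed point on `ℝ/ℤ` and the multiplier at every fixed point is `≠ 1`. -/
def Hyperbolic (f : AnalyticCircleDiffeo) : Prop :=
  (∃ x : ℝ, ∃ k : ℤ, f.toFun x = x + k) ∧
    ∀ x : ℝ, (∃ k : ℤ, f.toFun x = x + k) → deriv f.toFun x ≠ 1


lemma continuous_toFun (f : AnalyticCircleDiffeo) : Continuous f.toFun :=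
  continuous_iff_continuousAt.2 fun x => (f.analyticAt_toFun x).continuousAt

lemma map_add_int (f : AnalyticCircleDiffeo) (x : ℝ) (m : ℤ) :
    f.toFun (x + m) = f.toFun x + m := by
  induction m using Int.induction_on with
  | zero => simp
  | succ k ih =>
    have h1 : x + ((k : ℤ) + 1 : ℤ) = (x + (k : ℤ)) + 1 := by push_cast; ring
    rw [h1, f.map_add_one, ih]; push_cast; ring
  | pred k ih =>
    have h1 : (x + (-(k : ℤ) - 1 : ℤ)) + 1 = x + (-(k : ℤ) : ℤ) := by push_cast; ring
    have h2 := f.map_add_one (x + (-(k : ℤ) - 1 : ℤ))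
    rw [h1, ih] at h2
    push_cast at h2 ⊢
    linarith

lemma iterate_map_add_int (f : AnalyticCircleDiffeo) (n : ℕ) (x : ℝ) (m : ℤ) :
    f.toFun^[n] (x + m) = f.toFun^[n] x + m := by
  induction n generalizing x with
  | zero => simp
  | succ n ih =>
    rw [Function.iterate_succ_apply, f.map_add_int, Function.iterate_succ_apply, ih]

lemma analyticAt_iterate (f : AnalyticCircleDiffeo) (n : ℕ) (x : ℝ) :
    AnalyticAt ℝ (f.toFun^[n]) x := by
  induction n generalizing x with
  | zero => simpa using (analyticAt_id : AnalyticAt ℝ id x)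
  | succ n ih =>
    rw [Function.iterate_succ']
    exact (f.analyticAt_toFun _).comp (ih x)

lemma tendsto_aux (g : AnalyticCircleDiffeo) (p : ℤ) (q : ℕ) (hq : 1 ≤ q) (c : ℝ)
    (h : g.toFun^[q] c = c + p) :
    Tendsto (fun n : ℕ => g.toFun^[n] 0 / n) atTop (𝓝 ((p:ℝ)/q)) := by
  have hq0 : (0:ℝ) < q := by exact_mod_cast hq
  have hmul : ∀ m : ℕ, g.toFun^[m * q] c = c + (m : ℝ) * p := by
    intro m
    induction m with
    | zero => simp
    | succ m ih =>
      have e : (m+1) * q = m*q + q := by ring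
      rw [e, Function.iterate_add_apply, h]
      have : c + (p:ℝ) = c + ((p : ℤ) : ℝ) := by norm_num
      rw [this, g.iterate_map_add_int, ih]
      push_cast; ring
  have hdec : ∀ n : ℕ, g.toFun^[n] c = g.toFun^[n % q] c + ((n / q : ℕ) : ℝ) * p := by
    intro n
    have e : n = n % q + (n / q) * q := (Nat.mod_add_div' n q).symm
    conv_lhs => rw [e]
    rw [Function.iterate_add_apply, hmul]
    have e2 : (((((n/q : ℕ) : ℤ) * p : ℤ)) : ℝ) = ((n / q : ℕ) : ℝ) * (p : ℝ) := by
      rw [Int.cast_mul, Int.cast_natCast]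
    rw [show c + ((n / q : ℕ) : ℝ) * (p : ℝ) = c + (((((n/q : ℕ) : ℤ) * p : ℤ)) : ℝ) by rw [e2],
      g.iterate_map_add_int, e2]
  obtain ⟨B, hB⟩ : ∃ B : ℝ, ∀ r < q, |g.toFun^[r] c| ≤ B := by
    refine ⟨(Finset.range q).sup' ⟨0, Finset.mem_range.2 hq⟩ (fun r => |g.toFun^[r] c|), ?_⟩
    intro r hr
    exact Finset.le_sup' (fun r => |g.toFun^[r] c|) (Finset.mem_range.2 hr)
  set K : ℕ := ⌈|c|⌉₊ with hKdef
  have hKc : |c| ≤ K := Nat.le_ceil _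
  have hmono : ∀ n, Monotone (g.toFun^[n]) := fun n => g.strictMono_toFun.monotone.iterate n
  have hlow : ∀ n, g.toFun^[n] c - K ≤ g.toFun^[n] 0 := by
    intro n
    have h0 : c + ((-(K:ℤ) : ℤ) : ℝ) ≤ 0 := by
      push_cast
      have := abs_le.1 hKc
      linarith [this.2]
    have := hmono n h0
    rw [g.iterate_map_add_int] at this
    push_cast at this
    linarith
  have hup : ∀ n, g.toFun^[n] 0 ≤ g.toFun^[n] c + K := by
    intro n
    have h0 : (0:ℝ) ≤ c + ((K:ℤ) : ℝ) := by
      push_cast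
      have := abs_le.1 hKc
      linarith [this.1]
    have := hmono n h0
    rw [g.iterate_map_add_int] at this
    push_cast at this
    linarith
  set C : ℝ := (K:ℝ) + B + |(p:ℝ)| with hCdef
  have hbound : ∀ n : ℕ, 1 ≤ n → |g.toFun^[n] 0 / n - (p:ℝ)/q| ≤ C / n := by
    intro n hn
    have hn0 : (0:ℝ) < n := by exact_mod_cast hn
    set r : ℕ := n % q with hrdef
    set m : ℕ := n / q with hmdef
    have hr : r < q := Nat.mod_lt _ (by omega)
    have heq : (q:ℝ) * (m:ℝ) = (n:ℝ) - (r:ℝ) := by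
      have h0 : r + q * m = n := by rw [hrdef, hmdef]; exact Nat.mod_add_div n q
      have h0' : ((r + q * m : ℕ) : ℝ) = n := by exact_mod_cast h0
      push_cast at h0'
      linarith
    have h1 : |g.toFun^[n] 0 - g.toFun^[n] c| ≤ K :=
      abs_le.2 ⟨by linarith [hlow n], by linarith [hup n]⟩
    have h2 : g.toFun^[n] c - (n:ℝ) * ((p:ℝ)/q) = g.toFun^[r] c - (r:ℝ) * ((p:ℝ)/q) := by
      rw [hdec n, ← hrdef, ← hmdef]
      field_simp
      linear_combination (p:ℝ) * heq
    have h3 : |(r:ℝ) * ((p:ℝ)/q)| ≤ |(p:ℝ)| := by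
      rw [abs_mul, abs_div, abs_of_nonneg (by positivity : (0:ℝ) ≤ (r:ℝ)),
        abs_of_pos hq0]
      have hrq : (r:ℝ) ≤ q := by exact_mod_cast hr.le
      calc (r:ℝ) * (|(p:ℝ)|/q) ≤ (q:ℝ) * (|(p:ℝ)|/q) :=
            mul_le_mul_of_nonneg_right hrq (by positivity)
        _ = |(p:ℝ)| := by field_simp
    have key : |g.toFun^[n] 0 - (n:ℝ) * ((p:ℝ)/q)| ≤ C := by
      have t1 : |g.toFun^[n] c - (n:ℝ) * ((p:ℝ)/q)| ≤ B + |(p:ℝ)| := by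
        rw [h2]
        calc |g.toFun^[r] c - (r:ℝ) * ((p:ℝ)/q)|
            ≤ |g.toFun^[r] c| + |(r:ℝ) * ((p:ℝ)/q)| := abs_sub _ _
          _ ≤ B + |(p:ℝ)| := add_le_add (hB r hr) h3
      calc |g.toFun^[n] 0 - (n:ℝ) * ((p:ℝ)/q)|
          ≤ |g.toFun^[n] 0 - g.toFun^[n] c| + |g.toFun^[n] c - (n:ℝ) * ((p:ℝ)/q)| :=
            abs_sub_le _ _ _
        _ ≤ (K:ℝ) + (B + |(p:ℝ)|) := add_le_add h1 t1
        _ = C := by rw [hCdef]; ring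
    have e : g.toFun^[n] 0 / n - (p:ℝ)/q = (g.toFun^[n] 0 - (n:ℝ) * ((p:ℝ)/q)) / n := by
      rw [sub_div, mul_div_cancel_left₀ _ hn0.ne']
    rw [e, abs_div, abs_of_pos hn0]
    gcongr
  have hC : Tendsto (fun n : ℕ => C / n) atTop (𝓝 0) :=
    tendsto_const_div_atTop_nhds_zero_nat _
  rw [tendsto_iff_dist_tendsto_zero]
  refine squeeze_zero' (by filter_upwards with n using dist_nonneg) ?_ hC
  filter_upwards [eventually_ge_atTop 1] with n hn
  rw [Real.dist_eq]
  exact hbound n hn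

lemma rot_eq_of_periodic (g : AnalyticCircleDiffeo) (p : ℤ) (q : ℕ) (hq : 1 ≤ q) (c : ℝ)
    (h : g.toFun^[q] c = c + p) : rot g = (p:ℝ)/q :=
  (g.tendsto_aux p q hq c h).limUnder_eq

lemma continuous_addConst_iterate (f : AnalyticCircleDiffeo) (n : ℕ) :
    Continuous (fun pr : ℝ × ℝ => (f.addConst pr.1).toFun^[n] pr.2) := by
  induction n with
  | zero => simpa using continuous_snd
  | succ n ih =>
    have : (fun pr : ℝ × ℝ => (f.addConst pr.1).toFun^[n+1] pr.2)
        = fun pr : ℝ × ℝ => f.toFun ((f.addConst pr.1).toFun^[n] pr.2) + pr.1 := by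
      funext pr
      rw [Function.iterate_succ_apply']
      rfl
    rw [this]
    exact (f.continuous_toFun.comp ih).add continuous_fst

end AnalyticCircleDiffeo

/-- A real number is Diophantine. -/
def Diophantine (ρ : ℝ) : Prop :=
  ∃ C > (0:ℝ), ∃ β > (0:ℝ), ∀ p : ℤ, ∀ q : ℕ, 0 < q →
    |ρ - p / q| ≥ C / (q : ℝ) ^ ((2:ℝ) + β)


open AnalyticCircleDiffeo in
/-- If an analytic circle diffeomorphism `f` (with lift `F`) has a
hyperbolic periodic orbit of rotation number `p/q` (i.e. `F^q x₀ = x₀ + p` and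
`(F^q)' x₀ ≠ 1` for some `x₀`), then `rot (f + ω) = p/q (mod 1)` for all sufficiently
small real `ω`; in particular `ω = 0` is interior to `I_{p/q}`. -/
theorem statement7 (f : AnalyticCircleDiffeo) (p : ℤ) (q : ℕ) (hq : 1 ≤ q)
    (hpq : Int.gcd p (q : ℤ) = 1) (x₀ : ℝ)
    (hper : f.toFun^[q] x₀ = x₀ + (p : ℝ))
    (hhyp : deriv (f.toFun^[q]) x₀ ≠ 1) :
    ∃ ε > (0 : ℝ), ∀ ω : ℝ, |ω| < ε →
      ∃ k : ℤ, rot (f.addConst ω) = (p : ℝ) / (q : ℝ) + (k : ℝ) := by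
  have hg_an : AnalyticAt ℝ (f.toFun^[q]) x₀ := f.analyticAt_iterate q x₀
  have hd : HasDerivAt (f.toFun^[q]) (deriv (f.toFun^[q]) x₀) x₀ :=
    hg_an.differentiableAt.hasDerivAt
  set s : ℝ := deriv (f.toFun^[q]) x₀ - 1 with hsdef
  have hs0 : s ≠ 0 := sub_ne_zero.2 hhyp
  set φ : ℝ → ℝ := fun x => f.toFun^[q] x - x - p with hφdef
  have hφd : HasDerivAt φ s x₀ := (hd.sub (hasDerivAt_id x₀)).sub_const _
  have hφ0 : φ x₀ = 0 := by simp [hφdef, hper]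
  have hslope : Tendsto (slope φ x₀) (𝓝[≠] x₀) (𝓝 s) := hasDerivAt_iff_tendsto_slope.1 hφd
  have hsign : ∀ u : ℝ, |u - s| < |s| → 0 < u * s := by
    intro u hu
    have h2 := abs_lt.1 hu
    rcases lt_or_gt_of_ne hs0 with h | h
    · rw [abs_of_neg h] at h2; nlinarith [h2.1, h2.2]
    · rw [abs_of_pos h] at h2; nlinarith [h2.1, h2.2]
  have hev : ∀ᶠ x in 𝓝[≠] x₀, 0 < slope φ x₀ x * s := by
    filter_upwards [hslope (Metric.ball_mem_nhds s (abs_pos.2 hs0))] with x hx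
    exact hsign _ (by rw [← Real.dist_eq]; exact hx)
  obtain ⟨a, ha2, ha1⟩ :=
    ((hev.filter_mono (nhdsWithin_mono x₀ fun x (hx : x ∈ Set.Iio x₀) => ne_of_lt hx)).and
      eventually_mem_nhdsWithin).exists
  obtain ⟨b, hb2, hb1⟩ :=
    ((hev.filter_mono (nhdsWithin_mono x₀ fun x (hx : x ∈ Set.Ioi x₀) => ne_of_gt hx)).and
      eventually_mem_nhdsWithin).exists
  rw [Set.mem_Iio] at ha1
  rw [Set.mem_Ioi] at hb1
  have hax : a - x₀ < 0 := sub_neg.2 ha1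
  have hbx : (0:ℝ) < b - x₀ := sub_pos.2 hb1
  have haφ : φ a * s < 0 := by
    have hne : a - x₀ ≠ 0 := ne_of_lt hax
    have hsl : slope φ x₀ a = φ a / (a - x₀) := by rw [slope_def_field, hφ0, sub_zero]
    rw [hsl] at ha2
    have h3 := mul_neg_of_pos_of_neg ha2 hax
    calc φ a * s = φ a / (a - x₀) * s * (a - x₀) := by field_simp
      _ < 0 := h3
  have hbφ : 0 < φ b * s := by
    have hne : b - x₀ ≠ 0 := ne_of_gt hbx
    have hsl : slope φ x₀ b = φ b / (b - x₀) := by rw [slope_def_field, hφ0, sub_zero]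
    rw [hsl] at hb2
    have h3 := mul_pos hb2 hbx
    calc (0:ℝ) < φ b / (b - x₀) * s * (b - x₀) := h3
      _ = φ b * s := by field_simp
  have hcont := f.continuous_addConst_iterate q
  set Φ : ℝ → ℝ → ℝ := fun ω x => (f.addConst ω).toFun^[q] x - x - p with hΦdef
  have hΦcont : ∀ x, Continuous fun ω => Φ ω x := fun x =>
    ((hcont.comp (continuous_id.prodMk continuous_const)).sub continuous_const).sub
      continuous_const
  have hΦcontx : ∀ ω, Continuous fun x => Φ ω x := fun ω =>
    ((hcont.comp (continuous_const.prodMk continuous_id)).sub continuous_id).sub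
      continuous_const
  have hΦ0 : ∀ x, Φ 0 x = φ x := by
    intro x
    have he : (f.addConst 0).toFun = f.toFun := funext fun y => add_zero _
    simp only [hΦdef, hφdef, he]
  have hA : ∀ᶠ ω in 𝓝 (0:ℝ), Φ ω a * s < 0 :=
    Filter.Tendsto.eventually_lt_const (by show Φ 0 a * s < 0; rw [hΦ0 a]; exact haφ)
      (((hΦcont a).mul continuous_const).tendsto 0)
  have hB' : ∀ᶠ ω in 𝓝 (0:ℝ), 0 < Φ ω b * s :=
    Filter.Tendsto.eventually_const_lt (by show 0 < Φ 0 b * s; rw [hΦ0 b]; exact hbφ)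
      (((hΦcont b).mul continuous_const).tendsto 0)
  obtain ⟨ε, hε, hball⟩ := Metric.eventually_nhds_iff.1 (hA.and hB')
  refine ⟨ε, hε, fun ω hω => ?_⟩
  obtain ⟨h₁, h₂⟩ := hball (by rw [Real.dist_eq, sub_zero]; exact hω)
  have hab : a ≤ b := le_of_lt (lt_trans ha1 hb1)
  have hcx : ContinuousOn (fun x => Φ ω x) (Set.Icc a b) := (hΦcontx ω).continuousOn
  have hex : ∃ c ∈ Set.Icc a b, Φ ω c = 0 := by
    rcases lt_or_gt_of_ne hs0 with hs | hs
    · have ha' : 0 < Φ ω a := by by_contra h; push_neg at h; nlinarith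
      have hb'' : Φ ω b < 0 := by by_contra h; push_neg at h; nlinarith
      obtain ⟨c, hc, hc0⟩ := intermediate_value_Icc' hab hcx
        (show (0:ℝ) ∈ Set.Icc (Φ ω b) (Φ ω a) from ⟨hb''.le, ha'.le⟩)
      exact ⟨c, hc, hc0⟩
    · have ha' : Φ ω a < 0 := by by_contra h; push_neg at h; nlinarith
      have hb'' : 0 < Φ ω b := by by_contra h; push_neg at h; nlinarith
      obtain ⟨c, hc, hc0⟩ := intermediate_value_Icc hab hcx
        (show (0:ℝ) ∈ Set.Icc (Φ ω a) (Φ ω b) from ⟨ha'.le, hb''.le⟩)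
      exact ⟨c, hc, hc0⟩
  obtain ⟨c, hc, hc0⟩ := hex
  have hfix : (f.addConst ω).toFun^[q] c = c + p := by
    simp only [hΦdef] at hc0; linarith
  exact ⟨0, by rw [rot_eq_of_periodic (f.addConst ω) p q hq c hfix]; push_cast; ring⟩
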